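/- arXiv:1605.01420 — 2 statements merged into one kernel-verified Lean document; each statement's English description precedes it below -/
import Mathlib

section
/- The composition V U_X U_Z, where U_Z copies the Z basis, U_X copies the X (Fourier) basis, and V = Σ_x |x⟩⟨x|_{A''} ⊗ (Z^x)_{A'} is a controlled-phase gate, equals the isometry W mapping |ψ⟩_A to (1/√d) Σ_{x=0}^{d−1} |x⟩_{A''} ⊗ |x̃⟩_A ⊗ |ψ⟩_{A'}; in particular, applying W to any unit vector produces a maximally entangled state on A A''. -/
open Matrix Kronecker Complex BigOperators
open scoped ComplexOrder Classical

noncomputable section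

/-- primitive d-th root of unity -/
def omg (d : ℕ) : ℂ := Complex.exp (2 * Real.pi * Complex.I / d)

/-- standard basis vector |z⟩ -/
def ketZ (d : ℕ) (z : Fin d) : Fin d → ℂ := fun i => if i = z then 1 else 0

/-- Fourier basis vector |x̃⟩ = (1/√d) Σ_z ω^{xz} |z⟩ -/
def ketX (d : ℕ) (x : Fin d) : Fin d → ℂ :=
  fun z => ((1 / Real.sqrt d : ℝ) : ℂ) * omg d ^ ((x : ℕ) * (z : ℕ))

/-- projector |z⟩⟨z| -/
def projZ (d : ℕ) (z : Fin d) : Matrix (Fin d) (Fin d) ℂ :=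
  Matrix.vecMulVec (ketZ d z) (star (ketZ d z))

/-- projector |x̃⟩⟨x̃| -/
def projX (d : ℕ) (x : Fin d) : Matrix (Fin d) (Fin d) ℂ :=
  Matrix.vecMulVec (ketX d x) (star (ketX d x))

/-- positive semidefinite square root (0 if not PSD) -/
def msqrt {n : Type*} [Fintype n] [DecidableEq n] (M : Matrix n n ℂ) : Matrix n n ℂ :=
  if h : M.PosSemidef then h.1.eigenvectorUnitary.1 * diagonal ((↑) ∘ Real.sqrt ∘ h.1.eigenvalues) *
    (star h.1.eigenvectorUnitary : Matrix n n ℂ) else 0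

/-- trace norm ‖M‖₁ = Tr √(MᴴM) -/
def trNorm {n : Type*} [Fintype n] [DecidableEq n] (M : Matrix n n ℂ) : ℝ :=
  (msqrt (Mᴴ * M)).trace.re

/-- fidelity F(ρ,σ) = ‖√ρ√σ‖₁ -/
def Fid {n : Type*} [Fintype n] [DecidableEq n] (ρ σ : Matrix n n ℂ) : ℝ :=
  trNorm (msqrt ρ * msqrt σ)

/-- a POVM with d outcomes -/
def IsPOVM {n : Type*} [Fintype n] [DecidableEq n] {d : ℕ} (Λ : Fin d → Matrix n n ℂ) : Prop :=
  (∀ z, (Λ z).PosSemidef) ∧ ∑ z, Λ z = 1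

/-- optimal guessing probability of the measurement with rank-one elements P z on A,
given the B part of the bipartite state ψ -/
def Pguess {d : ℕ} {β : Type*} [Fintype β] [DecidableEq β]
    (P : Fin d → Matrix (Fin d) (Fin d) ℂ) (ψ : Matrix (Fin d × β) (Fin d × β) ℂ) : ℝ :=
  sSup { r | ∃ Λ : Fin d → Matrix β β ℂ, IsPOVM Λ ∧
    r = (Matrix.trace ((∑ z, P z ⊗ₖ Λ z) * ψ)).re }

/-- the coherent copy isometry U_Z : |z⟩_A ↦ (|z⟩_A, |z⟩_{A'}) -/
def UZmat (d : ℕ) : Matrix (Fin d × Fin d) (Fin d) ℂ :=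
  fun p z => if p.1 = z ∧ p.2 = z then 1 else 0

/-- U_X ⊗ 1_{A'} : copies the Fourier basis of A to A''.  Index order (a'', a, a'). -/
def UXext (d : ℕ) : Matrix (Fin d × Fin d × Fin d) (Fin d × Fin d) ℂ :=
  fun q p => (if q.2.2 = p.2 then 1 else 0) * (ketX d q.1 q.2.1 * (starRingEnd ℂ) (ketX d q.1 p.1))

/-- controlled-phase gate V = Σ_x |x⟩⟨x|_{A''} ⊗ Z^x_{A'} (diagonal in (a'', a, a')) -/
def Vcp (d : ℕ) : Matrix (Fin d × Fin d × Fin d) (Fin d × Fin d × Fin d) ℂ :=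
  fun q q' => if q = q' then omg d ^ ((q.1 : ℕ) * (q.2.2 : ℕ)) else 0

/-- the target isometry W : |ψ⟩_A ↦ (1/√d) Σ_x |x⟩_{A''} ⊗ |x̃⟩_A ⊗ |ψ⟩_{A'} -/
def Wmat (d : ℕ) : Matrix (Fin d × Fin d × Fin d) (Fin d) ℂ :=
  fun q z => if q.2.2 = z then ((1 / Real.sqrt d : ℝ) : ℂ) * ketX d q.1 q.2.1 else 0

/-- the maximally entangled vector (1/√d) Σ_x |x⟩_{A''} ⊗ |x̃⟩_A on A''A -/
def PhiX (d : ℕ) : Fin d × Fin d → ℂ :=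
  fun p => ((1 / Real.sqrt d : ℝ) : ℂ) * ketX d p.1 p.2

/-- V U_X U_Z = W, and applying W to any unit vector ψ produces the
maximally entangled state on A A'' in product with ψ on A'. -/
theorem VUXUZ_eq_W (d : ℕ) [NeZero d] :
    Vcp d * UXext d * UZmat d = Wmat d ∧
    ∀ ψ : Fin d → ℂ, (∑ z, Complex.normSq (ψ z)) = 1 →
      (Wmat d).mulVec ψ = fun q => PhiX d (q.1, q.2.1) * ψ q.2.2 := by
  have habs : ∀ n : ℕ, omg d ^ n * (starRingEnd ℂ) (omg d ^ n) = 1 := by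
    intro n
    rw [Complex.mul_conj]
    have h1 : ‖omg d‖ = 1 := by
      rw [omg, Complex.norm_exp]
      have : (2 * ↑Real.pi * Complex.I / ↑d).re = 0 := by
        simp [Complex.div_re]
      rw [this, Real.exp_zero]
    simp [Complex.normSq_eq_norm_sq, map_pow, h1]
  constructor
  · ext q z
    simp only [Matrix.mul_apply, UZmat, UXext, Vcp, Wmat]
    rw [Finset.sum_eq_single ((z, z) : Fin d × Fin d)]
    · rw [Finset.sum_eq_single q]
      · by_cases h : q.2.2 = z
        · subst h
          simp only [if_pos rfl, and_self, if_true, one_mul, mul_one, ketX, _root_.map_mul,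
            Complex.conj_ofReal]
          linear_combination ((1 / Real.sqrt d : ℝ) : ℂ) * ((1 / Real.sqrt d : ℝ) : ℂ) *
            omg d ^ ((q.1 : ℕ) * (q.2.1 : ℕ)) * habs ((q.1 : ℕ) * (q.2.2 : ℕ))
        · simp [h]
      · intro b _ hb
        rw [if_neg (fun hh => hb hh.symm), zero_mul]
      · simp
    · intro b _ hb
      have : ¬(b.1 = z ∧ b.2 = z) := fun ⟨h1, h2⟩ => hb (Prod.ext h1 h2)
      rw [if_neg this, mul_zero]
    · simp
  · intro ψ _
    funext q
    simp only [Matrix.mulVec, dotProduct, Wmat, PhiX]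
    rw [Finset.sum_eq_single q.2.2]
    · simp [mul_assoc]
    · intro b _ hb
      simp [Ne.symm hb]
    · simp
end
end

section
/- The arccosine of fidelity satisfies the triangle inequality for pure states: for unit vectors |φ⟩, |χ⟩, |ξ⟩ in a Hilbert space, arccos|⟨φ|ξ⟩| ≤ arccos|⟨φ|χ⟩| + arccos|⟨χ|ξ⟩|. -/
open scoped InnerProductSpace

lemma arccos_antitone : Antitone Real.arccos := fun x y h => by
  simp only [Real.arccos_eq_pi_div_two_sub_arcsin]
  linarith [Real.monotone_arcsin h]

lemma key_ineq {n : ℕ} (φ χ ξ : EuclideanSpace ℂ (Fin n))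
    (hφ : ‖φ‖ = 1) (hχ : ‖χ‖ = 1) (hξ : ‖ξ‖ = 1) :
    ‖⟪φ, χ⟫_ℂ‖ * ‖⟪χ, ξ⟫_ℂ‖ - Real.sqrt (1 - ‖⟪φ, χ⟫_ℂ‖ ^ 2) * Real.sqrt (1 - ‖⟪χ, ξ⟫_ℂ‖ ^ 2)
      ≤ ‖⟪φ, ξ⟫_ℂ‖ := by
  set φp := φ - ⟪χ, φ⟫_ℂ • χ with hφp
  set ξp := ξ - ⟪χ, ξ⟫_ℂ • χ with hξp
  have hχ2 : ⟪χ, χ⟫_ℂ = 1 := by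
    rw [inner_self_eq_norm_sq_to_K, hχ]; norm_num
  have hdecomp : ⟪φ, ξ⟫_ℂ = ⟪φ, χ⟫_ℂ * ⟪χ, ξ⟫_ℂ + ⟪φp, ξp⟫_ℂ := by
    simp only [hφp, hξp, inner_sub_left, inner_sub_right, inner_smul_left,
      inner_smul_right, hχ2, mul_one, inner_conj_symm, RingHomCompTriple.comp_apply,
      Complex.conj_conj]
    ring
  have hnφp : ‖φp‖ ^ 2 = 1 - ‖⟪φ, χ⟫_ℂ‖ ^ 2 := by
    have := norm_sub_sq (𝕜 := ℂ) φ (⟪χ, φ⟫_ℂ • χ)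
    rw [hφp, this, norm_smul, hφ, hχ, inner_smul_right]
    rw [← inner_conj_symm φ χ]
    simp only [Complex.mul_conj, Complex.normSq_eq_norm_sq, RCLike.norm_conj,
      ← Complex.ofReal_pow]
    rw [show (RCLike.re : ℂ →+ ℝ) = Complex.reAddGroupHom from rfl]
    simp only [Complex.reAddGroupHom, AddMonoidHom.coe_mk, ZeroHom.coe_mk, Complex.ofReal_re]
    ring
  have hnξp : ‖ξp‖ ^ 2 = 1 - ‖⟪χ, ξ⟫_ℂ‖ ^ 2 := by
    have := norm_sub_sq (𝕜 := ℂ) ξ (⟪χ, ξ⟫_ℂ • χ)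
    rw [hξp, this, norm_smul, hξ, hχ, inner_smul_right]
    rw [← inner_conj_symm ξ χ]
    simp only [Complex.mul_conj, Complex.normSq_eq_norm_sq, RCLike.norm_conj,
      ← Complex.ofReal_pow]
    rw [show (RCLike.re : ℂ →+ ℝ) = Complex.reAddGroupHom from rfl]
    simp only [Complex.reAddGroupHom, AddMonoidHom.coe_mk, ZeroHom.coe_mk, Complex.ofReal_re]
    ring
  have hcs : ‖⟪φp, ξp⟫_ℂ‖ ≤ Real.sqrt (1 - ‖⟪φ, χ⟫_ℂ‖ ^ 2) * Real.sqrt (1 - ‖⟪χ, ξ⟫_ℂ‖ ^ 2) := by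
    calc ‖⟪φp, ξp⟫_ℂ‖ ≤ ‖φp‖ * ‖ξp‖ := norm_inner_le_norm φp ξp
      _ = _ := by
        rw [← Real.sqrt_sq (norm_nonneg φp), ← Real.sqrt_sq (norm_nonneg ξp), hnφp, hnξp]
  calc ‖⟪φ, χ⟫_ℂ‖ * ‖⟪χ, ξ⟫_ℂ‖ - Real.sqrt (1 - ‖⟪φ, χ⟫_ℂ‖ ^ 2) * Real.sqrt (1 - ‖⟪χ, ξ⟫_ℂ‖ ^ 2)
      ≤ ‖⟪φ, χ⟫_ℂ * ⟪χ, ξ⟫_ℂ‖ - ‖⟪φp, ξp⟫_ℂ‖ := by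
        rw [norm_mul]; linarith
    _ ≤ ‖⟪φ, χ⟫_ℂ * ⟪χ, ξ⟫_ℂ + ⟪φp, ξp⟫_ℂ‖ := by
        have h := norm_sub_norm_le (⟪φ, χ⟫_ℂ * ⟪χ, ξ⟫_ℂ) (-⟪φp, ξp⟫_ℂ)
        rw [sub_neg_eq_add, norm_neg] at h
        exact h
    _ = ‖⟪φ, ξ⟫_ℂ‖ := by rw [hdecomp]

/-- the arccosine of the overlap satisfies the triangle inequality
for unit vectors. -/
theorem arccos_fidelity_triangle {n : ℕ} (φ χ ξ : EuclideanSpace ℂ (Fin n))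
    (hφ : ‖φ‖ = 1) (hχ : ‖χ‖ = 1) (hξ : ‖ξ‖ = 1) :
    Real.arccos ‖⟪φ, ξ⟫_ℂ‖ ≤ Real.arccos ‖⟪φ, χ⟫_ℂ‖ + Real.arccos ‖⟪χ, ξ⟫_ℂ‖ := by
  set a := ‖⟪φ, χ⟫_ℂ‖
  set b := ‖⟪χ, ξ⟫_ℂ‖
  set c := ‖⟪φ, ξ⟫_ℂ‖
  have ha0 : (0:ℝ) ≤ a := norm_nonneg _
  have hb0 : (0:ℝ) ≤ b := norm_nonneg _
  have ha1 : a ≤ 1 := by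
    have := norm_inner_le_norm (𝕜 := ℂ) φ χ; rw [hφ, hχ] at this; simpa using this
  have hb1 : b ≤ 1 := by
    have := norm_inner_le_norm (𝕜 := ℂ) χ ξ; rw [hχ, hξ] at this; simpa using this
  set A := Real.arccos a with hA
  set B := Real.arccos b with hB
  have hAB0 : 0 ≤ A + B := by
    have := Real.arccos_nonneg a; have := Real.arccos_nonneg b; linarith
  have hABπ : A + B ≤ Real.pi := by
    have h1 : A ≤ Real.pi / 2 := Real.arccos_le_pi_div_two.2 ha0
    have h2 : B ≤ Real.pi / 2 := Real.arccos_le_pi_div_two.2 hb0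
    linarith
  have hcos : Real.cos (A + B) ≤ c := by
    rw [Real.cos_add, hA, hB, Real.cos_arccos (by linarith) ha1,
      Real.cos_arccos (by linarith) hb1, Real.sin_arccos, Real.sin_arccos]
    exact key_ineq φ χ ξ hφ hχ hξ
  calc Real.arccos c ≤ Real.arccos (Real.cos (A + B)) := arccos_antitone hcos
    _ = A + B := Real.arccos_cos hAB0 hABπ
end
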